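/- Let A ∈ ℂ^{m×n} have rows a_1ᴴ,…,a_mᴴ with ‖a_r‖₂ = 1 for all r. Let x̂ ∈ ℂ^n and y ∈ ℝ^m with y_r = |⟨a_r, x̂⟩|². Let σ ≥ 0 satisfy ‖A v‖₂ ≥ σ‖v‖₂ for all v ∈ ℂ^n. For x ∈ ℂ^n and each r define the simple Kaczmarz phase-retrieval update x^r = x + (√(y_r)·phase(⟨a_r, x⟩) − ⟨a_r, x⟩)·a_r. Then (1/m) Σ_{r=1}^m dist²(x^r, x̂) ≤ (1 − σ²/m)·dist²(x, x̂) + 4·max_{1≤r≤m} y_r. (One-step expected error bound for the randomized simple Kaczmarz method for phase retrieval with uniform row selection.) -/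

import Mathlib

open scoped BigOperators ComplexConjugate InnerProductSpace

/-- phase(w) = w/|w| if w ≠ 0, else 1. -/
noncomputable def phase (w : ℂ) : ℂ := if w = 0 then 1 else w / (‖w‖ : ℂ)

/-- Euclidean norm of a complex vector. -/
noncomputable def evnorm {ι : Type*} [Fintype ι] (v : ι → ℂ) : ℝ :=
  Real.sqrt (∑ i, ‖v i‖ ^ 2)

/-- Euclidean norm of a real vector. -/
noncomputable def rvnorm {ι : Type*} [Fintype ι] (v : ι → ℝ) : ℝ :=
  Real.sqrt (∑ i, (v i) ^ 2)

/-- Standard Hermitian inner product, conjugate-linear in the first argument. -/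
noncomputable def hinner {n : ℕ} (a x : Fin n → ℂ) : ℂ := ∑ i, conj (a i) * x i

/-- dist(x, x̂) = min over unimodular ω of ‖x − ω·x̂‖₂. -/
noncomputable def pdist {n : ℕ} (x xhat : Fin n → ℂ) : ℝ :=
  ⨅ ω : {ω : ℂ // ‖ω‖ = 1}, evnorm (x - (ω : ℂ) • xhat)

/-- Operator (spectral) norm of a complex matrix w.r.t. Euclidean norms. -/
noncomputable def matOpNorm {ι κ : Type*} [Fintype ι] [Fintype κ] [DecidableEq κ]
    (M : Matrix ι κ ℂ) : ℝ :=
  ‖LinearMap.toContinuousLinearMap (Matrix.toEuclideanLin M)‖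

noncomputable def toE {n : ℕ} (v : Fin n → ℂ) : EuclideanSpace ℂ (Fin n) :=
  (WithLp.equiv 2 (Fin n → ℂ)).symm v

lemma evnorm_eq_norm {n : ℕ} (v : Fin n → ℂ) : evnorm v = ‖toE v‖ := by
  rw [EuclideanSpace.norm_eq]
  simp [evnorm, toE]

lemma hinner_eq_inner {n : ℕ} (a x : Fin n → ℂ) : hinner a x = ⟪toE a, toE x⟫_ℂ := by
  simp [hinner, toE, PiLp.inner_apply, RCLike.inner_apply]
  exact Finset.sum_congr rfl fun _ _ => mul_comm _ _

lemma phase_abs (w : ℂ) : ‖phase w‖ = 1 := by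
  unfold phase
  split
  · simp
  · next hw =>
    rw [norm_div, Complex.norm_real, norm_norm,
      div_self (norm_ne_zero_iff.mpr hw)]

lemma evnorm_nonneg {ι : Type*} [Fintype ι] (v : ι → ℂ) : 0 ≤ evnorm v := Real.sqrt_nonneg _

lemma pdist_bdd {n : ℕ} (x xhat : Fin n → ℂ) :
    BddBelow (Set.range fun ω : {ω : ℂ // ‖ω‖ = 1} => evnorm (x - (ω : ℂ) • xhat)) := by
  refine ⟨0, ?_⟩
  rintro v ⟨ω', rfl⟩
  exact evnorm_nonneg _

lemma pdist_le {n : ℕ} (x xhat : Fin n → ℂ) (ω : ℂ) (hω : ‖ω‖ = 1) :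
    pdist x xhat ≤ evnorm (x - ω • xhat) :=
  ciInf_le (pdist_bdd x xhat) ⟨ω, hω⟩

lemma pdist_nonneg {n : ℕ} (x xhat : Fin n → ℂ) : 0 ≤ pdist x xhat :=
  Real.iInf_nonneg fun _ => evnorm_nonneg _

lemma exists_min {n : ℕ} (x xhat : Fin n → ℂ) :
    ∃ ω₀ : ℂ, ‖ω₀‖ = 1 ∧ pdist x xhat = evnorm (x - ω₀ • xhat) := by
  have hset : {ω : ℂ | ‖ω‖ = 1} = Metric.sphere (0:ℂ) 1 := by
    ext ω; simp [Complex.norm_def, Complex.dist_eq, Complex.norm_def]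
  have hcpt : IsCompact {ω : ℂ | ‖ω‖ = 1} := hset ▸ isCompact_sphere 0 1
  have hne : ({ω : ℂ | ‖ω‖ = 1}).Nonempty := ⟨1, by simp⟩
  have hcont : Continuous fun ω : ℂ => evnorm (x - ω • xhat) := by
    have h1 : ∀ ω : ℂ, evnorm (x - ω • xhat) = ‖toE x - ω • toE xhat‖ := fun ω => by
      rw [evnorm_eq_norm]; rfl
    simp only [h1]
    fun_prop
  obtain ⟨ω₀, hmem, hmin⟩ := hcpt.exists_isMinOn hne hcont.continuousOn
  haveI : Nonempty {ω : ℂ // ‖ω‖ = 1} := ⟨⟨1, by simp⟩⟩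
  refine ⟨ω₀, hmem, le_antisymm (pdist_le x xhat ω₀ hmem) (le_ciInf fun ω => ?_)⟩
  exact hmin ω.2

lemma key_norm {n : ℕ} (a h : EuclideanSpace ℂ (Fin n)) (hna : ‖a‖ = 1) (d : ℂ) :
    ‖h + (d - ⟪a, h⟫_ℂ) • a‖ ^ 2
      = ‖h‖ ^ 2 - ‖⟪a, h⟫_ℂ‖ ^ 2 + ‖d‖ ^ 2 := by
  set c : ℂ := ⟪a, h⟫_ℂ with hc
  have hdecomp : h + (d - c) • a = (h - c • a) + d • a := by module
  have haa : ⟪a, a⟫_ℂ = 1 := by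
    rw [inner_self_eq_norm_sq_to_K, hna]; norm_num
  have horth : ⟪h - c • a, d • a⟫_ℂ = 0 := by
    rw [inner_sub_left, inner_smul_left, inner_smul_right, inner_smul_right, haa,
      ← inner_conj_symm h a]
    ring
  have h1 : ‖h - c • a‖ ^ 2 = ‖h‖ ^ 2 - ‖c‖ ^ 2 := by
    rw [norm_sub_sq (𝕜 := ℂ), inner_smul_right, ← inner_conj_symm h a, ← hc,
      Complex.mul_conj, norm_smul, hna]
    simp only [RCLike.re_to_complex, Complex.ofReal_re,
      Complex.normSq_eq_norm_sq]
    ring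
  have h2 : ‖d • a‖ ^ 2 = ‖d‖ ^ 2 := by
    rw [norm_smul, hna]; ring
  rw [hdecomp, norm_add_sq (𝕜 := ℂ) _ _, horth, h1, h2]
  simp only [map_zero, mul_zero, add_zero]

lemma hinner_sub_right {n : ℕ} (a u v : Fin n → ℂ) :
    hinner a (u - v) = hinner a u - hinner a v := by
  simp [hinner, mul_sub, Finset.sum_sub_distrib]

lemma hinner_smul_right {n : ℕ} (a : Fin n → ℂ) (c : ℂ) (v : Fin n → ℂ) :
    hinner a (c • v) = c * hinner a v := by
  simp only [hinner, Pi.smul_apply, smul_eq_mul, Finset.mul_sum]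
  exact Finset.sum_congr rfl fun i _ => by ring

lemma per_row {n : ℕ} (a x xhat : Fin n → ℂ) (ha : evnorm a = 1)
    (ω₀ : ℂ) (hω : ‖ω₀‖ = 1)
    (yr : ℝ) (hyr : yr = ‖hinner a xhat‖ ^ 2) :
    pdist (x + ((Real.sqrt yr : ℂ) * phase (hinner a x) - hinner a x) • a) xhat ^ 2
      ≤ evnorm (x - ω₀ • xhat) ^ 2
        - ‖hinner a (x - ω₀ • xhat)‖ ^ 2 + 4 * yr := by
  set h : Fin n → ℂ := x - ω₀ • xhat with hh
  set t : ℂ := (Real.sqrt yr : ℂ) * phase (hinner a x) - hinner a x with htdef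
  set d : ℂ := (Real.sqrt yr : ℂ) * phase (hinner a x) - hinner a (ω₀ • xhat) with hddef
  have hyr0 : 0 ≤ yr := hyr ▸ sq_nonneg _
  have ht : t = d - hinner a h := by
    rw [htdef, hddef, hh, hinner_sub_right]; ring
  have hstep1 : x + t • a - ω₀ • xhat = h + t • a := by
    rw [hh]; module
  have hnormle : pdist (x + t • a) xhat ≤ evnorm (h + t • a) := by
    rw [← hstep1]; exact pdist_le _ _ ω₀ hω
  have hsq : evnorm (h + t • a) ^ 2
      = evnorm h ^ 2 - ‖hinner a h‖ ^ 2 + ‖d‖ ^ 2 := by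
    rw [evnorm_eq_norm, evnorm_eq_norm, hinner_eq_inner]
    have he : toE (h + t • a) = toE h + (d - ⟪toE a, toE h⟫_ℂ) • toE a := by
      rw [ht, hinner_eq_inner]; rfl
    rw [he]
    exact key_norm (toE a) (toE h) (by rw [← evnorm_eq_norm, ha]) d
  have h1 : ‖(Real.sqrt yr : ℂ) * phase (hinner a x)‖ = Real.sqrt yr := by
    rw [norm_mul, phase_abs, Complex.norm_real, Real.norm_of_nonneg (Real.sqrt_nonneg _), mul_one]
  have h2 : ‖hinner a (ω₀ • xhat)‖ = Real.sqrt yr := by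
    rw [hinner_smul_right, norm_mul, hω, one_mul, hyr, Real.sqrt_sq (norm_nonneg _)]
  have hd : ‖d‖ ≤ 2 * Real.sqrt yr := by
    calc ‖d‖ ≤ ‖(Real.sqrt yr : ℂ) * phase (hinner a x) - 0‖
        + ‖0 - hinner a (ω₀ • xhat)‖ := norm_sub_le_norm_sub_add_norm_sub _ 0 _
      _ = 2 * Real.sqrt yr := by
          rw [sub_zero, zero_sub, norm_neg, h1, h2]; ring
  have hd2 : ‖d‖ ^ 2 ≤ 4 * yr := by
    calc ‖d‖ ^ 2 ≤ (2 * Real.sqrt yr) ^ 2 :=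
          pow_le_pow_left₀ (norm_nonneg _) hd 2
      _ = 4 * yr := by rw [mul_pow, Real.sq_sqrt hyr0]; norm_num
  calc pdist (x + t • a) xhat ^ 2 ≤ evnorm (h + t • a) ^ 2 :=
        pow_le_pow_left₀ (pdist_nonneg _ _) hnormle 2
    _ = evnorm h ^ 2 - ‖hinner a h‖ ^ 2 + ‖d‖ ^ 2 := hsq
    _ ≤ evnorm h ^ 2 - ‖hinner a h‖ ^ 2 + 4 * yr := by linarith

/-- One-step expected error bound for the randomized simple Kaczmarz
method for phase retrieval with uniform row selection. -/
theorem stmt10 {m n : ℕ} (a : Fin m → Fin n → ℂ) (ha : ∀ r, evnorm (a r) = 1)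
    (xhat : Fin n → ℂ) (y : Fin m → ℝ)
    (hy : ∀ r, y r = ‖hinner (a r) xhat‖ ^ 2)
    (σ : ℝ) (hσ : 0 ≤ σ)
    (hsing : ∀ v : Fin n → ℂ, σ * evnorm v ≤ evnorm (fun r => hinner (a r) v))
    (x : Fin n → ℂ) :
    (1 / (m : ℝ)) * ∑ r, pdist
        (x + ((Real.sqrt (y r) : ℂ) * phase (hinner (a r) x) - hinner (a r) x) • a r)
        xhat ^ 2 ≤
      (1 - σ ^ 2 / (m : ℝ)) * pdist x xhat ^ 2 + 4 * ⨆ r, y r := by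
  rcases Nat.eq_zero_or_pos m with hm | hm
  · subst hm
    have hsup : (⨆ r : Fin 0, y r) = 0 := Real.iSup_of_isEmpty _
    simp only [Nat.cast_zero, div_zero, hsup, Finset.univ_eq_empty, Finset.sum_empty,
      mul_zero, add_zero, sub_zero, one_mul]
    positivity
  · have hmR : (0 : ℝ) < m := by exact_mod_cast hm
    obtain ⟨ω₀, hω, hpd⟩ := exists_min x xhat
    set h : Fin n → ℂ := x - ω₀ • xhat with hh
    set S : ℝ := ⨆ r, y r with hS
    have hsup : ∀ r, y r ≤ S := fun r => le_ciSup (Set.finite_range y).bddAbove r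
    have hrow : ∀ r, pdist
        (x + ((Real.sqrt (y r) : ℂ) * phase (hinner (a r) x) - hinner (a r) x) • a r)
        xhat ^ 2 ≤ evnorm h ^ 2 - ‖hinner (a r) h‖ ^ 2 + 4 * S := by
      intro r
      refine (per_row (a r) x xhat (ha r) ω₀ hω (y r) (hy r)).trans ?_
      have := hsup r
      rw [← hh]
      linarith
    have hsum : ∑ r, pdist
        (x + ((Real.sqrt (y r) : ℂ) * phase (hinner (a r) x) - hinner (a r) x) • a r)
        xhat ^ 2 ≤ (m : ℝ) * evnorm h ^ 2
          - ∑ r, ‖hinner (a r) h‖ ^ 2 + (m : ℝ) * (4 * S) := by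
      calc _ ≤ ∑ r : Fin m, (evnorm h ^ 2 - ‖hinner (a r) h‖ ^ 2 + 4 * S) :=
            Finset.sum_le_sum fun r _ => hrow r
        _ = (m : ℝ) * evnorm h ^ 2 - ∑ r, ‖hinner (a r) h‖ ^ 2
            + (m : ℝ) * (4 * S) := by
            rw [Finset.sum_add_distrib, Finset.sum_sub_distrib, Finset.sum_const,
              Finset.sum_const, Finset.card_univ, Fintype.card_fin, nsmul_eq_mul, nsmul_eq_mul]
    have hA : σ ^ 2 * evnorm h ^ 2 ≤ ∑ r, ‖hinner (a r) h‖ ^ 2 := by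
      have h1 : (σ * evnorm h) ^ 2 ≤ evnorm (fun r => hinner (a r) h) ^ 2 :=
        pow_le_pow_left₀ (mul_nonneg hσ (evnorm_nonneg _)) (hsing h) 2
      have h2 : evnorm (fun r => hinner (a r) h) ^ 2
          = ∑ r, ‖hinner (a r) h‖ ^ 2 := by
        rw [evnorm]
        exact Real.sq_sqrt (Finset.sum_nonneg fun r _ => sq_nonneg _)
      calc σ ^ 2 * evnorm h ^ 2 = (σ * evnorm h) ^ 2 := by ring
        _ ≤ _ := h2 ▸ h1
    rw [hpd]
    calc (1 / (m : ℝ)) * ∑ r, pdist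
          (x + ((Real.sqrt (y r) : ℂ) * phase (hinner (a r) x) - hinner (a r) x) • a r)
          xhat ^ 2
        ≤ (1 / (m : ℝ)) * ((m : ℝ) * evnorm h ^ 2
            - ∑ r, ‖hinner (a r) h‖ ^ 2 + (m : ℝ) * (4 * S)) :=
          mul_le_mul_of_nonneg_left hsum (by positivity)
      _ ≤ (1 / (m : ℝ)) * ((m : ℝ) * evnorm h ^ 2
            - σ ^ 2 * evnorm h ^ 2 + (m : ℝ) * (4 * S)) :=
          mul_le_mul_of_nonneg_left (by linarith) (by positivity)
      _ = (1 - σ ^ 2 / (m : ℝ)) * evnorm h ^ 2 + 4 * S := by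
          field_simp
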